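/- Let v₁ ∈ ℝ^p be a unit vector, P₁ = v₁ ⊗ v₁, and let P̂ ∈ ℝ^{p×p} be any matrix with nuclear norm ‖P̂‖_* ≤ 1. Then ‖P̂ − P₁‖_F² ≤ 2·(1 − ⟨P̂, P₁⟩). Moreover ⟨P̂, P₁⟩ ≤ 1, and for Σ₂ a symmetric positive semidefinite matrix with Σ₂ v₁ = 0 and operator norm ‖Σ₂‖ = σ₂, one has ⟨P̂, Σ₂⟩ ≤ σ₂·(1 − ⟨P̂, P₁⟩). -/

import Mathlib

open MeasureTheory ProbabilityTheory Finset

noncomputable section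

/-- Vectors in ℝ^p. -/
abbrev Vec (p : ℕ) := Fin p → ℝ

/-- p × p real matrices. -/
abbrev Mat (p : ℕ) := Matrix (Fin p) (Fin p) ℝ

/-- Euclidean (ℓ2) norm. -/
def l2 {p : ℕ} (u : Vec p) : ℝ := Real.sqrt (∑ i, (u i) ^ 2)

/-- ℓ1 norm. -/
def l1 {p : ℕ} (u : Vec p) : ℝ := ∑ i, |u i|

/-- Euclidean inner product. -/
def dotp {p : ℕ} (u v : Vec p) : ℝ := ∑ i, u i * v i

/-- θ_s(u,v) = (‖u‖₂ + s^{-1/2}‖u‖₁)(‖v‖₂ + s^{-1/2}‖v‖₁). -/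
def theta {p : ℕ} (s : ℝ) (u v : Vec p) : ℝ :=
  (l2 u + (Real.sqrt s)⁻¹ * l1 u) * (l2 v + (Real.sqrt s)⁻¹ * l1 v)

/-- Frobenius (Hilbert–Schmidt) inner product. -/
def frob {p : ℕ} (A B : Mat p) : ℝ := ∑ i, ∑ j, A i j * B i j

/-- Frobenius norm. -/
def frobNorm {p : ℕ} (A : Mat p) : ℝ := Real.sqrt (frob A A)

/-- The mixed atomic norm ‖B‖_{Γ_s}. -/
def mixedNorm {p : ℕ} (s : ℝ) (B : Mat p) : ℝ :=
  sInf { t | ∃ (K : ℕ) (u v : Fin K → Vec p),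
    B = ∑ k, Matrix.vecMulVec (u k) (v k) ∧ t = ∑ k, theta s (u k) (v k) }

/-- Dual norm of the mixed atomic norm. -/
def dualMixedNorm {p : ℕ} (s : ℝ) (Z : Mat p) : ℝ :=
  sSup { t | ∃ B : Mat p, mixedNorm s B ≤ 1 ∧ t = frob Z B }

/-- A vector is `s`-sparse if it has at most `s` nonzero entries. -/
def IsSparse {p : ℕ} (s : ℕ) (u : Vec p) : Prop := {i | u i ≠ 0}.ncard ≤ s

/-- Nuclear norm of a real matrix: the sum of its singular values. -/
def nuclearNorm {p : ℕ} (A : Mat p) : ℝ :=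
  ∑ i, Real.sqrt ((Matrix.isHermitian_iff_isSymm.mpr (Matrix.isSymm_transpose_mul_self A)).eigenvalues i)

/-- Operator (spectral) norm of a real matrix. -/
def opNorm {p : ℕ} (A : Mat p) : ℝ :=
  sSup { t | ∃ u v : Vec p, l2 u ≤ 1 ∧ l2 v ≤ 1 ∧ t = dotp (A.mulVec u) v }

/-- `X` has sub-Gaussian (ψ₂) norm at most `K`: `E exp(X²/K²) ≤ 2`. -/
def HasSubgaussianNorm {Ω : Type*} [MeasurableSpace Ω] (μ : Measure Ω) (X : Ω → ℝ) (K : ℝ) :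
    Prop := ∫ ω, Real.exp ((X ω) ^ 2 / K ^ 2) ∂μ ≤ 2

/-- `W` is a subgradient of the mixed atomic norm `‖·‖_{Γ_s}` at `B`. -/
def InSubdiff {p : ℕ} (s : ℝ) (W B : Mat p) : Prop :=
  ∀ C : Mat p, mixedNorm s B + frob W (C - B) ≤ mixedNorm s C

namespace SPCAhelper

variable {p : ℕ}

lemma dotp_self_nonneg (u : Vec p) : 0 ≤ dotp u u :=
  Finset.sum_nonneg fun _ _ => mul_self_nonneg _

lemma l2_eq_sqrt_dotp (u : Vec p) : l2 u = Real.sqrt (dotp u u) := by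
  simp [l2, dotp, pow_two]

lemma l2_nonneg (u : Vec p) : 0 ≤ l2 u := Real.sqrt_nonneg _

lemma l2_mul_self (u : Vec p) : l2 u * l2 u = dotp u u := by
  rw [l2_eq_sqrt_dotp]; exact Real.mul_self_sqrt (dotp_self_nonneg u)

lemma l2_eq_zero {u : Vec p} (h : l2 u = 0) : u = 0 := by
  have h1 : ∑ i, (u i)^2 = 0 := by
    have h2 := Real.sqrt_eq_zero'.mp h
    exact le_antisymm h2 (Finset.sum_nonneg fun i _ => sq_nonneg _)
  funext i
  have h3 := (Finset.sum_eq_zero_iff_of_nonneg (fun i _ => sq_nonneg (u i))).mp h1 i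
    (Finset.mem_univ i)
  exact pow_eq_zero_iff two_ne_zero |>.mp h3

lemma abs_dotp_le (u w : Vec p) : |dotp u w| ≤ l2 u * l2 w := by
  have h3 : (dotp u w)^2 ≤ (∑ i, (u i)^2) * (∑ i, (w i)^2) :=
    Finset.sum_mul_sq_le_sq_mul_sq _ _ _
  calc |dotp u w| = Real.sqrt ((dotp u w)^2) := (Real.sqrt_sq_eq_abs _).symm
    _ ≤ Real.sqrt ((∑ i, (u i)^2) * (∑ i, (w i)^2)) := Real.sqrt_le_sqrt h3
    _ = l2 u * l2 w := by
        rw [Real.sqrt_mul (Finset.sum_nonneg fun i _ => sq_nonneg _)]; rfl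

lemma dotp_le_l2 (u w : Vec p) : dotp u w ≤ l2 u * l2 w :=
  (le_abs_self _).trans (abs_dotp_le u w)

lemma dotp_comm (u w : Vec p) : dotp u w = dotp w u := by
  simp [dotp, mul_comm]

lemma dotp_smul_left (c : ℝ) (u w : Vec p) : dotp (c • u) w = c * dotp u w := by
  simp [dotp, Finset.mul_sum, mul_assoc]

lemma dotp_smul_right (c : ℝ) (u w : Vec p) : dotp u (c • w) = c * dotp u w := by
  rw [dotp_comm, dotp_smul_left, dotp_comm]

lemma dotp_add_right (u v w : Vec p) : dotp u (v + w) = dotp u v + dotp u w := by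
  simp [dotp, mul_add, Finset.sum_add_distrib]

lemma dotp_add_left (u v w : Vec p) : dotp (u + v) w = dotp u w + dotp v w := by
  simp [dotp, add_mul, Finset.sum_add_distrib]

lemma dotp_sub_right (u v w : Vec p) : dotp u (v - w) = dotp u v - dotp u w := by
  simp [dotp, mul_sub, Finset.sum_sub_distrib]

lemma dotp_sub_left (u v w : Vec p) : dotp (u - v) w = dotp u w - dotp v w := by
  simp [dotp, sub_mul, Finset.sum_sub_distrib]

lemma l2_smul (c : ℝ) (u : Vec p) : l2 (c • u) = |c| * l2 u := by
  unfold l2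
  have h : ∑ i, ((c • u) i)^2 = c^2 * ∑ i, (u i)^2 := by
    simp [Finset.mul_sum, mul_pow]
  rw [h, Real.sqrt_mul (sq_nonneg c), Real.sqrt_sq_eq_abs]

lemma dotp_mulVec (M : Mat p) (x y : Vec p) :
    dotp (M.mulVec x) y = dotp x ((Matrix.transpose M).mulVec y) := by
  unfold dotp
  simp only [Matrix.mulVec, dotProduct, Matrix.transpose_apply, Finset.sum_mul,
    Finset.mul_sum]
  rw [Finset.sum_comm]
  exact Finset.sum_congr rfl fun j _ => Finset.sum_congr rfl fun i _ => by ring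

lemma conjT_eq_transpose (M : Mat p) : Matrix.conjTranspose M = Matrix.transpose M :=
  Matrix.ext fun i j => by simp [Matrix.conjTranspose_apply]

lemma frob_self_nonneg (A : Mat p) : 0 ≤ frob A A :=
  Finset.sum_nonneg fun _ _ => Finset.sum_nonneg fun _ _ => mul_self_nonneg _

lemma vecMulVec_mulVec (v w u : Vec p) :
    (Matrix.vecMulVec v w).mulVec u = (dotp w u) • v := by
  funext i
  show ∑ j, Matrix.vecMulVec v w i j * u j = dotp w u * v i
  simp only [Matrix.vecMulVec_apply, dotp, Finset.sum_mul]
  exact Finset.sum_congr rfl fun j _ => by ring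

lemma frob_add_right (X A B : Mat p) : frob X (A + B) = frob X A + frob X B := by
  simp [frob, Matrix.add_apply, mul_add, Finset.sum_add_distrib]

lemma frob_smul_right (c : ℝ) (X A : Mat p) : frob X (c • A) = c * frob X A := by
  simp only [frob, Matrix.smul_apply, smul_eq_mul, Finset.mul_sum]
  exact Finset.sum_congr rfl fun i _ => Finset.sum_congr rfl fun j _ => by ring

lemma frob_sub_sub (A B : Mat p) :
    frob (A - B) (A - B) = frob A A - 2 * frob A B + frob B B := by
  have h : ∀ i, ∑ j, (A i j - B i j) * (A i j - B i j)
      = ∑ j, A i j * A i j - 2 * ∑ j, A i j * B i j + ∑ j, B i j * B i j := by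
    intro i
    rw [Finset.mul_sum, ← Finset.sum_sub_distrib, ← Finset.sum_add_distrib]
    exact Finset.sum_congr rfl fun j _ => by ring
  simp only [frob, Matrix.sub_apply]
  rw [Finset.mul_sum, ← Finset.sum_sub_distrib, ← Finset.sum_add_distrib]
  exact Finset.sum_congr rfl fun i _ => h i

lemma sum_sq_le_sq_sum {ι : Type*} [Fintype ι] (a : ι → ℝ) (h : ∀ i, 0 ≤ a i) :
    ∑ i, (a i) ^ 2 ≤ (∑ i, a i) ^ 2 := by
  calc ∑ i, (a i)^2 = ∑ i, a i * a i := by simp [pow_two]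
    _ ≤ ∑ i, a i * (∑ j, a j) := Finset.sum_le_sum fun i _ =>
        mul_le_mul_of_nonneg_left (Finset.single_le_sum (fun j _ => h j) (Finset.mem_univ i))
          (h i)
    _ = (∑ i, a i)^2 := by rw [← Finset.sum_mul, pow_two]

lemma l2_mulVec_le (M : Mat p) (x : Vec p) : l2 (M.mulVec x) ≤ frobNorm M * l2 x := by
  have h : ∀ i, (M.mulVec x i)^2 ≤ (∑ j, (M i j)^2) * (∑ j, (x j)^2) := fun i =>
    Finset.sum_mul_sq_le_sq_mul_sq Finset.univ (fun j => M i j) x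
  have h2 : ∑ i, (M.mulVec x i)^2 ≤ frob M M * (∑ j, (x j)^2) := by
    calc ∑ i, (M.mulVec x i)^2
        ≤ ∑ i, (∑ j, (M i j)^2) * (∑ j, (x j)^2) := Finset.sum_le_sum fun i _ => h i
      _ = (∑ i, ∑ j, (M i j)^2) * (∑ j, (x j)^2) := by rw [Finset.sum_mul]
      _ = frob M M * (∑ j, (x j)^2) := by
          congr 1
          simp [frob, pow_two]
  calc l2 (M.mulVec x) = Real.sqrt (∑ i, (M.mulVec x i)^2) := rfl
    _ ≤ Real.sqrt (frob M M * (∑ j, (x j)^2)) := Real.sqrt_le_sqrt h2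
    _ = frobNorm M * l2 x := by rw [Real.sqrt_mul (frob_self_nonneg M)]; rfl

/-- Trace identity in an orthonormal family indexed by all of `Fin p`. -/
lemma sum_dotp_mulVec (X A : Mat p) (e : Fin p → Vec p)
    (h : ∀ i j, dotp (e i) (e j) = if i = j then 1 else 0) :
    ∑ i, dotp (X.mulVec (e i)) (A.mulVec (e i)) = frob X A := by
  set V : Mat p := Matrix.of (fun i k => e i k) with hVdef
  have hV : V * Matrix.transpose V = 1 := by
    ext i j
    rw [Matrix.mul_apply]
    simpa [hVdef, Matrix.transpose_apply, Matrix.one_apply, dotp] using h i j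
  have hV' : Matrix.transpose V * V = 1 := mul_eq_one_comm.mp hV
  have key : ∀ j l, ∑ i, e i j * e i l = if j = l then (1:ℝ) else 0 := by
    intro j l
    have h2 := congrFun (congrFun hV' j) l
    simpa [hVdef, Matrix.mul_apply, Matrix.transpose_apply, Matrix.one_apply] using h2
  calc ∑ i, dotp (X.mulVec (e i)) (A.mulVec (e i))
      = ∑ i, ∑ k, ∑ j, ∑ l, (X k j * A k l) * (e i j * e i l) := by
        unfold dotp Matrix.mulVec dotProduct
        refine Finset.sum_congr rfl fun i _ => Finset.sum_congr rfl fun k _ => ?_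
        rw [Finset.sum_mul_sum]
        exact Finset.sum_congr rfl fun j _ => Finset.sum_congr rfl fun l _ => by ring
    _ = ∑ k, ∑ j, ∑ l, (X k j * A k l) * (∑ i, e i j * e i l) := by
        rw [Finset.sum_comm]
        refine Finset.sum_congr rfl fun k _ => ?_
        rw [Finset.sum_comm]
        refine Finset.sum_congr rfl fun j _ => ?_
        rw [Finset.sum_comm]
        exact Finset.sum_congr rfl fun l _ => (Finset.mul_sum _ _ _).symm
    _ = ∑ k, ∑ j, X k j * A k j := by
        refine Finset.sum_congr rfl fun k _ => Finset.sum_congr rfl fun j _ => ?_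
        simp [key]
    _ = frob X A := rfl

/-- An orthonormal eigenbasis for `Xᵀ X`. -/
lemma eigen_facts (X : Mat p) : ∃ e : Fin p → Vec p,
    (∀ i j, dotp (e i) (e j) = if i = j then 1 else 0) ∧
    (∀ i, dotp (X.mulVec (e i)) (X.mulVec (e i)) =
      ((Matrix.isHermitian_iff_isSymm.mpr (Matrix.isSymm_transpose_mul_self X))).eigenvalues i) := by
  have hH := (Matrix.isHermitian_iff_isSymm.mpr (Matrix.isSymm_transpose_mul_self X))
  refine ⟨fun i => ⇑(hH.eigenvectorBasis i), ?_, ?_⟩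
  · intro i j
    have h1 := hH.eigenvectorBasis.orthonormal
    rw [orthonormal_iff_ite] at h1
    have h2 := h1 i j
    simpa [PiLp.inner_apply, dotp, RCLike.inner_apply, conj_trivial, mul_comm] using h2
  · intro i
    show dotp (X.mulVec (hH.eigenvectorBasis i)) (X.mulVec (hH.eigenvectorBasis i)) = _
    have h3 : dotp (X.mulVec (hH.eigenvectorBasis i)) (X.mulVec (hH.eigenvectorBasis i))
        = dotp (hH.eigenvectorBasis i)
            ((Matrix.conjTranspose X * X).mulVec (hH.eigenvectorBasis i)) := by
      rw [dotp_mulVec, Matrix.mulVec_mulVec, conjT_eq_transpose]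
    rw [h3, eq_comm]
    have h5 := hH.eigenvalues_eq i
    simpa [dotp, dotProduct, Matrix.mulVec] using h5

lemma frob_self_eq (X : Mat p) :
    frob X X = ∑ i, ((Matrix.isHermitian_iff_isSymm.mpr (Matrix.isSymm_transpose_mul_self X))).eigenvalues i := by
  obtain ⟨e, horth, heig⟩ := eigen_facts X
  rw [← sum_dotp_mulVec X X e horth]
  exact Finset.sum_congr rfl fun i _ => heig i

lemma frob_self_le (X : Mat p) : frob X X ≤ (nuclearNorm X) ^ 2 := by
  rw [frob_self_eq]
  have h1 : ∀ i, ((Matrix.isHermitian_iff_isSymm.mpr (Matrix.isSymm_transpose_mul_self X))).eigenvalues i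
      = (Real.sqrt (((Matrix.isHermitian_iff_isSymm.mpr (Matrix.isSymm_transpose_mul_self X))).eigenvalues i))^2 := fun i =>
    (Real.sq_sqrt (Matrix.eigenvalues_conjTranspose_mul_self_nonneg X i)).symm
  calc ∑ i, ((Matrix.isHermitian_iff_isSymm.mpr (Matrix.isSymm_transpose_mul_self X))).eigenvalues i
      = ∑ i, (Real.sqrt (((Matrix.isHermitian_iff_isSymm.mpr (Matrix.isSymm_transpose_mul_self X))).eigenvalues i))^2 :=
        Finset.sum_congr rfl fun i _ => h1 i
    _ ≤ (∑ i, Real.sqrt (((Matrix.isHermitian_iff_isSymm.mpr (Matrix.isSymm_transpose_mul_self X))).eigenvalues i))^2 :=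
        sum_sq_le_sq_sum _ fun i => Real.sqrt_nonneg _
    _ = (nuclearNorm X)^2 := rfl

lemma nuclearNorm_nonneg (X : Mat p) : 0 ≤ nuclearNorm X :=
  Finset.sum_nonneg fun _ _ => Real.sqrt_nonneg _

/-- Main duality engine: if `‖A u‖ ≤ c` on unit vectors then `⟨X, A⟩ ≤ c ‖X‖_*`. -/
lemma frob_le_engine (X A : Mat p) (c : ℝ)
    (hA : ∀ u : Vec p, l2 u = 1 → l2 (A.mulVec u) ≤ c) :
    frob X A ≤ c * nuclearNorm X := by
  obtain ⟨e, horth, heig⟩ := eigen_facts X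
  have hunit : ∀ i, l2 (e i) = 1 := fun i => by
    rw [l2_eq_sqrt_dotp, horth i i]; simp
  have hl2Xe : ∀ i, l2 (X.mulVec (e i))
      = Real.sqrt (((Matrix.isHermitian_iff_isSymm.mpr (Matrix.isSymm_transpose_mul_self X))).eigenvalues i) := fun i => by
    rw [l2_eq_sqrt_dotp, heig i]
  rw [← sum_dotp_mulVec X A e horth]
  calc ∑ i, dotp (X.mulVec (e i)) (A.mulVec (e i))
      ≤ ∑ i, Real.sqrt (((Matrix.isHermitian_iff_isSymm.mpr (Matrix.isSymm_transpose_mul_self X))).eigenvalues i) * c := by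
        refine Finset.sum_le_sum fun i _ => ?_
        calc dotp (X.mulVec (e i)) (A.mulVec (e i))
            ≤ l2 (X.mulVec (e i)) * l2 (A.mulVec (e i)) := dotp_le_l2 _ _
          _ ≤ Real.sqrt (((Matrix.isHermitian_iff_isSymm.mpr (Matrix.isSymm_transpose_mul_self X))).eigenvalues i) * c := by
              rw [hl2Xe i]
              exact mul_le_mul_of_nonneg_left (hA _ (hunit i)) (Real.sqrt_nonneg _)
    _ = c * nuclearNorm X := by rw [← Finset.sum_mul, nuclearNorm, mul_comm]

end SPCAhelper

open SPCAhelper in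
/-- geometric facts used in the sparse PCA proof. -/
theorem sparse_pca_geometry {p : ℕ} (v1 : Vec p) (hv1 : l2 v1 = 1)
    (Phat : Mat p) (hP : nuclearNorm Phat ≤ 1) :
    (frobNorm (Phat - Matrix.vecMulVec v1 v1)) ^ 2
        ≤ 2 * (1 - frob Phat (Matrix.vecMulVec v1 v1)) ∧
    frob Phat (Matrix.vecMulVec v1 v1) ≤ 1 ∧
    ∀ (S2 : Mat p) (σ2 : ℝ), S2.PosSemidef → S2.mulVec v1 = 0 → opNorm S2 = σ2 →
      frob Phat S2 ≤ σ2 * (1 - frob Phat (Matrix.vecMulVec v1 v1)) := by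
  have hdot : dotp v1 v1 = 1 := by
    rw [l2_eq_sqrt_dotp] at hv1
    exact Real.sqrt_eq_one.mp hv1
  have hnn : 0 ≤ nuclearNorm Phat := nuclearNorm_nonneg Phat
  have hXX : frob Phat Phat ≤ 1 := by
    have h1 := frob_self_le Phat
    nlinarith
  -- ⟨X, P₁⟩ ≤ 1
  have hXP1 : frob Phat (Matrix.vecMulVec v1 v1) ≤ 1 := by
    have h2 : frob Phat (Matrix.vecMulVec v1 v1) ≤ 1 * nuclearNorm Phat := by
      refine frob_le_engine _ _ 1 fun u hu => ?_
      rw [vecMulVec_mulVec, l2_smul]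
      calc |dotp v1 u| * l2 v1 = |dotp v1 u| := by rw [hv1, mul_one]
        _ ≤ l2 v1 * l2 u := abs_dotp_le v1 u
        _ = 1 := by rw [hv1, hu, mul_one]
    linarith [h2, hP]
  have hP1P1 : frob (Matrix.vecMulVec v1 v1) (Matrix.vecMulVec v1 v1) = 1 := by
    have h3 : frob (Matrix.vecMulVec v1 v1) (Matrix.vecMulVec v1 v1)
        = (∑ i, v1 i * v1 i) * (∑ j, v1 j * v1 j) := by
      simp only [frob, Matrix.vecMulVec_apply, Finset.sum_mul, Finset.mul_sum]
      exact Finset.sum_congr rfl fun i _ => Finset.sum_congr rfl fun j _ => by ring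
    rw [h3]
    have h4 : (∑ i, v1 i * v1 i) = 1 := hdot
    rw [h4, mul_one]
  refine ⟨?_, hXP1, ?_⟩
  · -- part 1
    rw [frobNorm, Real.sq_sqrt (frob_self_nonneg _), frob_sub_sub, hP1P1]
    linarith
  · -- part 3
    intro S2 σ2 hpsd hker hop
    have hsym : Matrix.transpose S2 = S2 := by
      rw [← conjT_eq_transpose]; exact hpsd.1
    -- opNorm facts
    have hbdd : BddAbove {t | ∃ u v : Vec p, l2 u ≤ 1 ∧ l2 v ≤ 1 ∧ t = dotp (S2.mulVec u) v} := by
      refine ⟨frobNorm S2, ?_⟩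
      rintro t ⟨u, v, hu, hv, rfl⟩
      have h1 := dotp_le_l2 (S2.mulVec u) v
      have h2 := l2_mulVec_le S2 u
      have h3 := l2_nonneg (S2.mulVec u)
      have h4 := l2_nonneg v
      have h5 := l2_nonneg u
      have h6 : 0 ≤ frobNorm S2 := Real.sqrt_nonneg _
      nlinarith
    have hmem : ∀ x y : Vec p, l2 x ≤ 1 → l2 y ≤ 1 → dotp (S2.mulVec x) y ≤ σ2 := by
      intro x y hx hy
      rw [← hop]
      exact le_csSup hbdd ⟨x, y, hx, hy, rfl⟩
    have hl20 : l2 (0 : Vec p) = 0 := by simp [l2]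
    have hσnn : 0 ≤ σ2 := by
      have h7 := hmem 0 0 (by rw [hl20]; norm_num) (by rw [hl20]; norm_num)
      simpa [dotp] using h7
    have hbound : ∀ x : Vec p, l2 (S2.mulVec x) ≤ σ2 * l2 x := by
      intro x
      by_cases hx : l2 x = 0
      · have hx0 : x = 0 := l2_eq_zero hx
        rw [hx0, Matrix.mulVec_zero, hl20]
        simp [mul_nonneg hσnn (l2_nonneg (0 : Vec p))]
      by_cases hy : l2 (S2.mulVec x) = 0
      · rw [hy]; exact mul_nonneg hσnn (l2_nonneg x)
      have hxpos : 0 < l2 x := lt_of_le_of_ne (l2_nonneg x) (Ne.symm hx)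
      have hypos : 0 < l2 (S2.mulVec x) := lt_of_le_of_ne (l2_nonneg _) (Ne.symm hy)
      have hu1 : l2 ((l2 x)⁻¹ • x) ≤ 1 := by
        rw [l2_smul, abs_of_nonneg (inv_nonneg.mpr (l2_nonneg x)), inv_mul_cancel₀ hx]
      have hu2 : l2 ((l2 (S2.mulVec x))⁻¹ • (S2.mulVec x)) ≤ 1 := by
        rw [l2_smul, abs_of_nonneg (inv_nonneg.mpr (l2_nonneg _)), inv_mul_cancel₀ hy]
      have key := hmem _ _ hu1 hu2
      rw [Matrix.mulVec_smul, dotp_smul_left, dotp_smul_right, ← l2_mul_self] at key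
      have h8 : (l2 x)⁻¹ * ((l2 (S2.mulVec x))⁻¹ * (l2 (S2.mulVec x) * l2 (S2.mulVec x)))
          = (l2 x)⁻¹ * l2 (S2.mulVec x) := by
        field_simp
      rw [h8] at key
      calc l2 (S2.mulVec x) = l2 x * ((l2 x)⁻¹ * l2 (S2.mulVec x)) := by field_simp
        _ ≤ l2 x * σ2 := mul_le_mul_of_nonneg_left key (l2_nonneg x)
        _ = σ2 * l2 x := mul_comm _ _
    -- the key operator bound for A = S2 + σ2 • P1
    have hAbound : ∀ u : Vec p, l2 u = 1 →
        l2 ((S2 + σ2 • Matrix.vecMulVec v1 v1).mulVec u) ≤ σ2 := by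
      intro u hu
      have huu : dotp u u = 1 := by rw [← l2_mul_self, hu, mul_one]
      set c := dotp v1 u with hc
      have hc' : dotp u v1 = c := dotp_comm u v1
      have hAu : (S2 + σ2 • Matrix.vecMulVec v1 v1).mulVec u
          = S2.mulVec u + (σ2 * c) • v1 := by
        rw [Matrix.add_mulVec, Matrix.smul_mulVec, vecMulVec_mulVec, smul_smul]
      have hw : S2.mulVec u = S2.mulVec (u - c • v1) := by
        rw [Matrix.mulVec_sub, Matrix.mulVec_smul, hker, smul_zero, sub_zero]
      have hwnorm : dotp (u - c • v1) (u - c • v1) = 1 - c^2 := by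
        rw [dotp_sub_left, dotp_sub_right, dotp_sub_right, dotp_smul_left, dotp_smul_left,
          dotp_smul_right, dotp_smul_right, huu, hdot, hc']
        ring
      have hS2u : dotp (S2.mulVec u) (S2.mulVec u) ≤ σ2^2 * (1 - c^2) := by
        rw [hw]
        have h6 := hbound (u - c • v1)
        have h7 : l2 (S2.mulVec (u - c • v1)) * l2 (S2.mulVec (u - c • v1))
            ≤ (σ2 * l2 (u - c • v1)) * (σ2 * l2 (u - c • v1)) :=
          mul_le_mul h6 h6 (l2_nonneg _) (mul_nonneg hσnn (l2_nonneg _))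
        calc dotp (S2.mulVec (u - c • v1)) (S2.mulVec (u - c • v1))
            = l2 (S2.mulVec (u - c • v1)) * l2 (S2.mulVec (u - c • v1)) :=
              (l2_mul_self _).symm
          _ ≤ (σ2 * l2 (u - c • v1)) * (σ2 * l2 (u - c • v1)) := h7
          _ = σ2^2 * (l2 (u - c • v1) * l2 (u - c • v1)) := by ring
          _ = σ2^2 * (1 - c^2) := by rw [l2_mul_self, hwnorm]
      have hS2uv : dotp (S2.mulVec u) v1 = 0 := by
        rw [dotp_mulVec, hsym, hker]
        simp [dotp]
      have hAA : dotp ((S2 + σ2 • Matrix.vecMulVec v1 v1).mulVec u)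
          ((S2 + σ2 • Matrix.vecMulVec v1 v1).mulVec u)
          = dotp (S2.mulVec u) (S2.mulVec u) + (σ2 * c)^2 := by
        rw [hAu, dotp_add_left, dotp_add_right, dotp_add_right, dotp_smul_left,
          dotp_smul_left, dotp_smul_right, dotp_smul_right, hS2uv,
          dotp_comm v1 (S2.mulVec u), hS2uv, hdot]
        ring
      rw [l2_eq_sqrt_dotp]
      have h9 : dotp ((S2 + σ2 • Matrix.vecMulVec v1 v1).mulVec u)
          ((S2 + σ2 • Matrix.vecMulVec v1 v1).mulVec u) ≤ σ2^2 := by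
        rw [hAA]; nlinarith
      calc Real.sqrt (dotp ((S2 + σ2 • Matrix.vecMulVec v1 v1).mulVec u)
            ((S2 + σ2 • Matrix.vecMulVec v1 v1).mulVec u))
          ≤ Real.sqrt (σ2^2) := Real.sqrt_le_sqrt h9
        _ = σ2 := by rw [Real.sqrt_sq hσnn]
    have hfrobA : frob Phat (S2 + σ2 • Matrix.vecMulVec v1 v1) ≤ σ2 * nuclearNorm Phat :=
      frob_le_engine _ _ σ2 hAbound
    have hsplit : frob Phat (S2 + σ2 • Matrix.vecMulVec v1 v1)
        = frob Phat S2 + σ2 * frob Phat (Matrix.vecMulVec v1 v1) := by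
      rw [frob_add_right, frob_smul_right]
    have h10 : σ2 * nuclearNorm Phat ≤ σ2 := by nlinarith
    nlinarith [hfrobA, hsplit, h10]
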